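/- Suppose ε_λ > 0, α > 0, τ > 0, r ≥ 1, λ ∈ C with Re(λ) > 0 and βRe(λ) > 1, P(s) = (s+α)^r, F a function on the closed right half-plane with sup_{Re(s)≥0} |F(s)| < ε_λ α^r, and |βλ/(1-βλ)| ≥ ε_λ with ε_λ > 1 when r ≥ 2 (or |βRe(λ)/(1-βλ)| ≥ ε_λ when r = 1). Then the equation s^r + (βλ/(1-βλ)) P(s) = F(s) has no root s with Re(s) ≥ 0. -/

import Mathlib

set_option maxHeartbeats 1000000 in
/-- Suppose `ε_λ > 0`, `α, τ > 0`, `r ≥ 1`, `λ` has `Re λ > 0` and `β Re λ > 1`,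
`P(s) = (s+α)^r`, `F` satisfies `sup_{Re s ≥ 0} |F s| < ε_λ α^r`, and
`|βλ/(1-βλ)| ≥ ε_λ` with `ε_λ > 1` when `r ≥ 2` (or `β Re λ/|1-βλ| ≥ ε_λ` when
`r = 1`).  Then `s^r + (βλ/(1-βλ)) P(s) = F(s)` has no root with `Re s ≥ 0`. -/
theorem stmt_19 (β α τ εlam : ℝ) (r : ℕ) (hr : 1 ≤ r)
    (hβ : 0 < β) (hα : 0 < α) (hτ : 0 < τ) (hε : 0 < εlam)
    (lam : ℂ) (hre : 0 < lam.re) (hβre : 1 < β * lam.re)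
    (F : ℂ → ℂ)
    (hF : ∀ s : ℂ, 0 ≤ s.re → ‖F s‖ < εlam * α ^ r)
    (hεr2 : 2 ≤ r → 1 < εlam ∧ εlam ≤ ‖(β : ℂ) * lam / (1 - (β : ℂ) * lam)‖)
    (hεr1 : r = 1 → εlam ≤ β * lam.re / ‖1 - (β : ℂ) * lam‖) :
    ∀ s : ℂ, 0 ≤ s.re →
      s ^ r + ((β : ℂ) * lam / (1 - (β : ℂ) * lam)) * (s + (α : ℂ)) ^ r ≠ F s := by
  intro s hs heq
  have h1 : (1 : ℂ) - (β : ℂ) * lam ≠ 0 := by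
    intro h
    have h2 := congrArg Complex.re h
    simp [Complex.sub_re, Complex.mul_re] at h2
    nlinarith
  have habs1 : 0 < ‖1 - (β : ℂ) * lam‖ := norm_pos_iff.mpr h1
  have hFs := hF s hs
  rcases eq_or_lt_of_le hr with h1r | h2r
  · -- r = 1
    have hr1 : r = 1 := h1r.symm
    subst hr1
    have hε1 := hεr1 rfl
    have hrw : s ^ 1 + ((β : ℂ) * lam / (1 - (β : ℂ) * lam)) * (s + (α : ℂ)) ^ 1
        = (s + (β : ℂ) * lam * α) / (1 - (β : ℂ) * lam) := by
      field_simp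
      ring
    rw [hrw] at heq
    have hlow : β * lam.re * α ≤ ‖s + (β : ℂ) * lam * (α : ℂ)‖ := by
      have hre2 : (s + (β : ℂ) * lam * (α : ℂ)).re = s.re + β * lam.re * α := by
        simp [Complex.add_re, Complex.mul_re] <;> ring
      calc β * lam.re * α ≤ (s + (β : ℂ) * lam * (α : ℂ)).re := by rw [hre2]; linarith
        _ ≤ ‖s + (β : ℂ) * lam * (α : ℂ)‖ := Complex.re_le_norm _
    have hε1' : εlam * ‖1 - (β : ℂ) * lam‖ ≤ β * lam.re :=
      (le_div_iff₀ habs1).mp hε1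
    have hq : εlam * α ^ 1 ≤ ‖(s + (β : ℂ) * lam * α) / (1 - (β : ℂ) * lam)‖ := by
      rw [norm_div, pow_one, le_div_iff₀ habs1]
      nlinarith
    rw [heq] at hq
    exact absurd hFs (not_lt.mpr hq)
  · -- r ≥ 2
    have hr2 : 2 ≤ r := h2r
    obtain ⟨hε1, hεc⟩ := hεr2 hr2
    set c := (β : ℂ) * lam / (1 - (β : ℂ) * lam) with hc
    have hx0 : 0 ≤ ‖s‖ := norm_nonneg _
    set x := ‖s‖ with hx
    set A := ‖s + (α : ℂ)‖ with hA
    have hA2 : x ^ 2 + α ^ 2 ≤ A ^ 2 := by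
      have h1' : A ^ 2 = (s.re + α) ^ 2 + s.im ^ 2 := by
        rw [hA, Complex.sq_norm, Complex.normSq_apply]
        simp [Complex.add_re, Complex.add_im] <;> ring
      have h2' : x ^ 2 = s.re ^ 2 + s.im ^ 2 := by
        rw [hx, Complex.sq_norm, Complex.normSq_apply] <;> ring
      nlinarith
    have hAx : x ≤ A := by nlinarith [norm_nonneg (s + (α : ℂ))]
    have hAα : α ≤ A := by nlinarith [norm_nonneg (s + (α : ℂ))]
    obtain ⟨k, hk⟩ : ∃ k, r = k + 2 := ⟨r - 2, by omega⟩
    have hsup : x ^ r + α ^ r ≤ A ^ r := by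
      subst hk
      have h3 : x ^ k ≤ A ^ k := pow_le_pow_left₀ hx0 hAx k
      have h4 : α ^ k ≤ A ^ k := pow_le_pow_left₀ hα.le hAα k
      have h5 : x ^ k * x ^ 2 + α ^ k * α ^ 2 ≤ A ^ k * (x ^ 2 + α ^ 2) := by
        nlinarith [pow_nonneg hα.le k, pow_nonneg hx0 k, sq_nonneg x]
      calc x ^ (k + 2) + α ^ (k + 2) = x ^ k * x ^ 2 + α ^ k * α ^ 2 := by ring
        _ ≤ A ^ k * (x ^ 2 + α ^ 2) := h5
        _ ≤ A ^ k * A ^ 2 := by nlinarith [pow_nonneg (le_trans hα.le hAα) k]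
        _ = A ^ (k + 2) := by ring
    have hsub : ‖c * (s + (α : ℂ)) ^ r‖ - ‖s ^ r‖
        ≤ ‖s ^ r + c * (s + (α : ℂ)) ^ r‖ := by
      have h := norm_sub_norm_le (c * (s + (α : ℂ)) ^ r) (-(s ^ r))
      simp only [norm_neg, sub_neg_eq_add] at h
      rw [add_comm (s ^ r) (c * (s + (α : ℂ)) ^ r)]
      exact h
    have hcA : εlam * A ^ r ≤ ‖c * (s + (α : ℂ)) ^ r‖ := by
      rw [norm_mul, norm_pow]
      exact mul_le_mul_of_nonneg_right hεc (pow_nonneg (norm_nonneg _) r)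
    have hxr : ‖s ^ r‖ = x ^ r := by rw [norm_pow]
    rw [hxr] at hsub
    have key : εlam * α ^ r ≤ εlam * A ^ r - x ^ r := by
      nlinarith [pow_nonneg hx0 r, pow_nonneg hα.le r]
    have hlow : εlam * α ^ r ≤ ‖s ^ r + c * (s + (α : ℂ)) ^ r‖ := by
      linarith
    rw [heq] at hlow
    exact absurd hFs (not_lt.mpr hlow)
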